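/- Let R be a commutative Noetherian ring, W a finitely generated R-module, and x = x_1,...,x_n a sequence of elements of R. Then for all i, the Koszul homology modules satisfy dim H_{i+1}(x; W) ≤ dim H_i(x; W), i.e., the support of H_{i+1}(x; W) is contained in the support of H_i(x; W). -/

import Mathlib

open Finset

variable (R : Type) [CommRing R] (W : Type) [AddCommGroup W] [Module R W]

/-- The `i`-th term of the Koszul complex of a sequence `x_1,…,x_n` with coefficients in `W`:
the free `W`-valued functions on the `i`-element subsets of `{1,…,n}` (corresponding to
`⋀^i R^n ⊗ W`). -/
def koszulTerm (n : ℕ) (i : ℕ) : Type :=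
  {s : Finset (Fin n) // s.card = i} → W

instance (n i : ℕ) : AddCommGroup (koszulTerm W n i) := Pi.addCommGroup

instance (n i : ℕ) : Module R (koszulTerm W n i) := Pi.module _ _ _

/-- The Koszul differential `K_{i+1} → K_i`:
`(d f)(s) = Σ_{a ∉ s} (-1)^{#{b ∈ s | b < a}} x_a • f (s ∪ {a})`. -/
noncomputable def koszulD (n : ℕ) (x : Fin n → R) (i : ℕ) :
    koszulTerm W n (i + 1) →ₗ[R] koszulTerm W n i where
  toFun f s := ∑ a ∈ (s.1)ᶜ.attach,
    ((-1 : ℤ) ^ ((s.1.filter (fun b => b < a.1)).card)) • x a.1 •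
      f ⟨insert a.1 s.1, by
        have ha : a.1 ∉ s.1 := Finset.mem_compl.mp a.2
        simp [Finset.card_insert_of_notMem ha, s.2]⟩
  map_add' f g := by
    funext s
    show _ = (_ : W) + _
    rw [← Finset.sum_add_distrib]
    refine Finset.sum_congr rfl fun a _ => ?_
    show _ • _ • ((f ⟨_, _⟩ : W) + g ⟨_, _⟩) = _
    rw [smul_add, smul_add]
  map_smul' c f := by
    funext s
    show _ = c • (∑ _ ∈ _, _ : W)
    rw [Finset.smul_sum]
    refine Finset.sum_congr rfl fun a _ => ?_
    show _ • _ • (c • f ⟨_, _⟩ : W) = _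
    rw [smul_comm _ c, smul_comm _ c]

/-- The full Koszul differential `D_i : K_i → K_{i-1}`, with `D_0 = 0`. -/
noncomputable def koszulFullD (n : ℕ) (x : Fin n → R) :
    ∀ i : ℕ, koszulTerm W n i →ₗ[R] koszulTerm W n (i - 1)
  | 0 => 0
  | (i + 1) => koszulD R W n x i

/-- The `i`-th Koszul homology `H_i(x; W) = ker D_i / im D_{i+1}`. -/
noncomputable def koszulHomology (n : ℕ) (x : Fin n → R) (i : ℕ) : Type :=
  ↥(LinearMap.ker (koszulFullD R W n x i)) ⧸
    Submodule.comap (LinearMap.ker (koszulFullD R W n x i)).subtype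
      (LinearMap.range (koszulFullD R W n x (i + 1)))

noncomputable instance (n : ℕ) (x : Fin n → R) (i : ℕ) :
    AddCommGroup (koszulHomology R W n x i) := by
  unfold koszulHomology; infer_instance

noncomputable instance (n : ℕ) (x : Fin n → R) (i : ℕ) :
    Module R (koszulHomology R W n x i) := by
  unfold koszulHomology; infer_instance

namespace KoszulProof
noncomputable section

open Finset

variable {R : Type} [CommRing R] {W : Type} [AddCommGroup W] [Module R W]

/-! ### Hat functions and the combinatorial differential -/

/-- Sign `(-1)^{#{b ∈ s | b < a}}`. -/
def sgn {n : ℕ} (s : Finset (Fin n)) (a : Fin n) : ℤ :=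
  (-1) ^ ((s.filter (fun b => b < a)).card)

/-- The hat extension of a Koszul cochain to all finsets (zero outside the right degree). -/
def hat {n i : ℕ} (z : koszulTerm W n i) : Finset (Fin n) → W :=
  fun s => if h : s.card = i then z ⟨s, h⟩ else 0

/-- The combinatorial Koszul differential on arbitrary functions. -/
def Dh {n : ℕ} (x : Fin n → R) (F : Finset (Fin n) → W) : Finset (Fin n) → W :=
  fun s => ∑ a ∈ sᶜ, sgn s a • x a • F (insert a s)

lemma hat_apply {n i : ℕ} (z : koszulTerm W n i) (s : Finset (Fin n)) (h : s.card = i) :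
    hat z s = z ⟨s, h⟩ := dif_pos h

lemma hat_apply_ne {n i : ℕ} (z : koszulTerm W n i) (s : Finset (Fin n)) (h : s.card ≠ i) :
    hat z s = 0 := dif_neg h

lemma hat_injective {n i : ℕ} {z w : koszulTerm W n i} (h : hat z = hat w) : z = w := by
  funext s
  have := congrFun h s.1
  rwa [hat_apply z s.1 s.2, hat_apply w s.1 s.2] at this

lemma hat_add {n i : ℕ} (z w : koszulTerm W n i) : hat (z + w) = hat z + hat w := by
  funext s
  by_cases h : s.card = i
  · simp only [hat, dif_pos h, Pi.add_apply]; rfl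
  · simp only [hat, dif_neg h, Pi.add_apply, add_zero]

lemma hat_smul {n i : ℕ} (r : R) (z : koszulTerm W n i) : hat (r • z) = r • hat z := by
  funext s
  by_cases h : s.card = i
  · simp only [hat, dif_pos h, Pi.smul_apply]; rfl
  · simp only [hat, dif_neg h, Pi.smul_apply, smul_zero]

lemma hat_zsmul {n i : ℕ} (c : ℤ) (z : koszulTerm W n i) : hat (c • z) = c • hat z := by
  funext s
  by_cases h : s.card = i
  · simp only [hat, dif_pos h, Pi.smul_apply]; rfl
  · simp only [hat, dif_neg h, Pi.smul_apply, smul_zero]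

lemma hat_zero {n i : ℕ} : hat (0 : koszulTerm W n i) = 0 := by
  funext s
  by_cases h : s.card = i
  · simp only [hat, dif_pos h]; rfl
  · simp only [hat, dif_neg h]; rfl

lemma hat_sub {n i : ℕ} (z w : koszulTerm W n i) : hat (z - w) = hat z - hat w := by
  funext s
  by_cases h : s.card = i
  · simp only [hat, dif_pos h, Pi.sub_apply]; rfl
  · simp only [hat, dif_neg h, Pi.sub_apply, sub_zero]

lemma Dh_zero {n : ℕ} (x : Fin n → R) : Dh (W := W) x 0 = 0 := by
  funext s
  simp [Dh]

/-- The Koszul differential in terms of hats. -/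
lemma hat_koszulD {n i : ℕ} (x : Fin n → R) (f : koszulTerm W n (i + 1)) :
    hat (koszulD R W n x i f) = Dh x (hat f) := by
  funext s
  by_cases h : s.card = i
  · rw [hat_apply _ s h]
    show (∑ a ∈ sᶜ.attach, _ : W) = _
    rw [Dh]
    rw [← Finset.sum_attach sᶜ (fun a => sgn s a • x a • hat f (insert a s))]
    refine Finset.sum_congr rfl fun a _ => ?_
    have ha : a.1 ∉ s := Finset.mem_compl.mp a.2
    rw [hat_apply f (insert a.1 s) (by simp [Finset.card_insert_of_notMem ha, h])]
    rfl
  · rw [hat_apply_ne _ s h, Dh]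
    refine (Finset.sum_eq_zero fun a ha => ?_).symm
    have ha' : a ∉ s := Finset.mem_compl.mp ha
    rw [hat_apply_ne f _ (by rw [Finset.card_insert_of_notMem ha']; omega), smul_zero, smul_zero]

/-- For a degree-0 cochain the differential of the hat vanishes. -/
lemma Dh_hat_degree_zero {n : ℕ} (x : Fin n → R) (z : koszulTerm W n 0) :
    Dh x (hat z) = 0 := by
  funext s
  rw [Dh]
  refine Finset.sum_eq_zero fun a ha => ?_
  have ha' : a ∉ s := Finset.mem_compl.mp ha
  rw [hat_apply_ne z _ (by rw [Finset.card_insert_of_notMem ha']; omega), smul_zero, smul_zero]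



/-! ### Sign lemmas -/

lemma sgn_mul_self {n : ℕ} (s : Finset (Fin n)) (a : Fin n) : sgn s a * sgn s a = 1 := by
  rw [sgn, ← pow_add]
  exact Even.neg_one_pow ⟨_, rfl⟩

lemma sgn_insert_self {n : ℕ} (s : Finset (Fin n)) (t : Fin n) :
    sgn (insert t s) t = sgn s t := by
  rw [sgn, sgn, Finset.filter_insert, if_neg (lt_irrefl t)]

lemma sgn_erase_self {n : ℕ} (s : Finset (Fin n)) (t : Fin n) :
    sgn (s.erase t) t = sgn s t := by
  rw [sgn, sgn, Finset.filter_erase, Finset.erase_eq_of_notMem (by simp)]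

lemma sgn_insert_of_lt {n : ℕ} {s : Finset (Fin n)} {a t : Fin n} (h : a < t) (ha : a ∉ s) :
    sgn (insert a s) t = -sgn s t := by
  rw [sgn, sgn, Finset.filter_insert, if_pos h,
    Finset.card_insert_of_notMem (fun hm => ha (Finset.mem_of_mem_filter a hm)), pow_succ,
    mul_comm, neg_one_mul]

lemma sgn_insert_of_not_lt {n : ℕ} {s : Finset (Fin n)} {a t : Fin n} (h : ¬ a < t) :
    sgn (insert a s) t = sgn s t := by
  rw [sgn, sgn, Finset.filter_insert, if_neg h]

lemma sgn_erase_of_lt {n : ℕ} {s : Finset (Fin n)} {a t : Fin n} (h : t < a) (ht : t ∈ s) :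
    sgn (s.erase t) a = -sgn s a := by
  have hmem : t ∈ s.filter (fun b => b < a) := Finset.mem_filter.mpr ⟨ht, h⟩
  rw [sgn, sgn, Finset.filter_erase,
    Finset.card_erase_of_mem hmem]
  have hpos : 0 < (s.filter (fun b => b < a)).card := Finset.card_pos.mpr ⟨t, hmem⟩
  obtain ⟨k, hk⟩ : ∃ k, (s.filter (fun b => b < a)).card = k + 1 :=
    ⟨(s.filter (fun b => b < a)).card - 1, by omega⟩
  rw [hk]
  simp [pow_succ]

lemma sgn_erase_of_not_lt {n : ℕ} {s : Finset (Fin n)} {a t : Fin n} (h : ¬ t < a) :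
    sgn (s.erase t) a = sgn s a := by
  rw [sgn, sgn, Finset.filter_erase, Finset.erase_eq_of_notMem (by simp [h])]

/-! ### The contraction homotopy (Cartan formula) -/

/-- Contraction with the `t`-th basis vector. -/
def etah {n : ℕ} (t : Fin n) (F : Finset (Fin n) → W) : Finset (Fin n) → W :=
  fun s => if t ∈ s then sgn s t • F (s.erase t) else 0

lemma etah_zero {n : ℕ} (t : Fin n) : etah (W := W) t 0 = 0 := by
  funext s; simp [etah]

lemma cartan {n : ℕ} (x : Fin n → R) (t : Fin n) (F : Finset (Fin n) → W)
    (s : Finset (Fin n)) :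
    Dh x (etah t F) s + etah t (Dh x F) s = x t • F s := by
  by_cases ht : t ∈ s
  · have e1 : Dh x (etah t F) s
        = ∑ a ∈ sᶜ, (sgn s a * sgn (insert a s) t) • x a • F (insert a (s.erase t)) := by
      refine Finset.sum_congr rfl fun a ha => ?_
      have ha' : a ∉ s := Finset.mem_compl.mp ha
      have hat' : a ≠ t := fun h => ha' (h ▸ ht)
      rw [etah, if_pos (Finset.mem_insert_of_mem ht), Finset.erase_insert_of_ne hat',
        smul_comm (x a), smul_smul]
    have e2 : etah t (Dh x F) s
        = x t • F s + ∑ a ∈ sᶜ, (sgn s t * sgn (s.erase t) a) • x a • F (insert a (s.erase t)) := by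
      rw [etah, if_pos ht, Dh, Finset.compl_erase,
        Finset.sum_insert (by simp [ht]), smul_add, sgn_erase_self, Finset.insert_erase ht,
        smul_smul, sgn_mul_self, one_smul, Finset.smul_sum]
      congr 1
      refine Finset.sum_congr rfl fun a ha => ?_
      rw [smul_smul]
    rw [e1, e2, add_left_comm]
    have hsum : ∑ a ∈ sᶜ, (sgn s a * sgn (insert a s) t) • x a • F (insert a (s.erase t))
        + ∑ a ∈ sᶜ, (sgn s t * sgn (s.erase t) a) • x a • F (insert a (s.erase t)) = 0 := by
      rw [← Finset.sum_add_distrib]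
      refine Finset.sum_eq_zero fun a ha => ?_
      have ha' : a ∉ s := Finset.mem_compl.mp ha
      have hat' : a ≠ t := fun h => ha' (h ▸ ht)
      rw [← add_smul]
      rcases lt_or_gt_of_ne hat' with hlt | hgt
      · rw [sgn_insert_of_lt hlt ha',
          sgn_erase_of_not_lt (fun h => absurd (h.trans hlt) (lt_irrefl _)),
          mul_neg, mul_comm (sgn s t), neg_add_cancel, zero_smul]
      · rw [sgn_insert_of_not_lt (fun h => absurd (hgt.trans h) (lt_irrefl _)),
          sgn_erase_of_lt hgt ht, mul_neg, mul_comm (sgn s t), add_neg_cancel, zero_smul]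
    rw [hsum, add_zero]
  · have e2 : etah t (Dh x F) s = 0 := by rw [etah, if_neg ht]
    rw [e2, add_zero, Dh]
    rw [Finset.sum_eq_single_of_mem t (Finset.mem_compl.mpr ht) ?side]
    · rw [etah, if_pos (Finset.mem_insert_self t s), sgn_insert_self, Finset.erase_insert ht,
        smul_comm (x t), smul_smul, sgn_mul_self, one_smul]
    · intro a ha hne
      have : t ∉ insert a s := by
        simp only [Finset.mem_insert]
        push_neg
        exact ⟨Ne.symm hne, ht⟩
      rw [etah, if_neg this, smul_zero, smul_zero]


/-! ### Splitting off the last variable -/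

variable {n : ℕ}

/-- Preimage of a finset under `Fin.castSucc`. -/
def unmap (s : Finset (Fin (n + 1))) : Finset (Fin n) :=
  s.preimage Fin.castSucc (Fin.castSucc_injective n).injOn

lemma last_not_mem_map (u : Finset (Fin n)) :
    Fin.last n ∉ u.map Fin.castSuccEmb := by
  intro h
  obtain ⟨c, -, hc⟩ := Finset.mem_map.mp h
  exact absurd (hc ▸ Fin.castSucc_lt_last c) (lt_irrefl _)

lemma unmap_map (u : Finset (Fin n)) : unmap (u.map Fin.castSuccEmb) = u :=
  Finset.preimage_map _ _

lemma mem_map_castSucc (u : Finset (Fin n)) (c : Fin n) :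
    Fin.castSucc c ∈ u.map Fin.castSuccEmb ↔ c ∈ u := by
  rw [← Fin.coe_castSuccEmb]
  exact Finset.mem_map' _

lemma map_unmap {s : Finset (Fin (n + 1))} (h : Fin.last n ∉ s) :
    (unmap s).map Fin.castSuccEmb = s := by
  ext b
  by_cases hb : b = Fin.last n
  · subst hb
    simp only [last_not_mem_map, false_iff]
    exact fun hc => h hc
  · obtain ⟨c, rfl⟩ := Fin.exists_castSucc_eq.mpr hb
    rw [mem_map_castSucc]
    rw [unmap, Finset.mem_preimage]

lemma card_unmap {s : Finset (Fin (n + 1))} (h : Fin.last n ∉ s) :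
    (unmap s).card = s.card := by
  conv_rhs => rw [← map_unmap h]
  rw [Finset.card_map]

lemma compl_map (u : Finset (Fin n)) :
    (u.map Fin.castSuccEmb)ᶜ = insert (Fin.last n) (uᶜ.map Fin.castSuccEmb) := by
  ext b
  by_cases hb : b = Fin.last n
  · subst hb
    exact iff_of_true (Finset.mem_compl.mpr (last_not_mem_map u)) (Finset.mem_insert_self _ _)
  · obtain ⟨c, rfl⟩ := Fin.exists_castSucc_eq.mpr hb
    have hc : Fin.castSucc c ≠ Fin.last n := (Fin.castSucc_lt_last c).ne
    simp only [Finset.mem_compl, Finset.mem_insert, mem_map_castSucc, hc, false_or]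

lemma map_insert_castSucc (u : Finset (Fin n)) (c : Fin n) :
    (insert c u).map Fin.castSuccEmb = insert (Fin.castSucc c) (u.map Fin.castSuccEmb) :=
  Finset.map_insert _ _ _

lemma sgn_map (u : Finset (Fin n)) (c : Fin n) :
    sgn (u.map Fin.castSuccEmb) (Fin.castSucc c) = sgn u c := by
  have h : (u.map Fin.castSuccEmb).filter (fun b => b < Fin.castSucc c)
      = (u.filter (fun b => b < c)).map Fin.castSuccEmb := by
    rw [Finset.filter_map]
    congr 1
  rw [sgn, sgn, h, Finset.card_map]

lemma sgn_map_last (u : Finset (Fin n)) :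
    sgn (u.map Fin.castSuccEmb) (Fin.last n) = (-1) ^ u.card := by
  rw [sgn, Finset.filter_true_of_mem, Finset.card_map]
  intro b hb
  obtain ⟨c, -, rfl⟩ := Finset.mem_map.mp hb
  exact Fin.castSucc_lt_last c

lemma sgn_insert_last (u : Finset (Fin n)) (c : Fin n) :
    sgn (insert (Fin.last n) (u.map Fin.castSuccEmb)) (Fin.castSucc c) = sgn u c := by
  rw [sgn, Finset.filter_insert, if_neg (by exact (Fin.le_last _).not_gt), ← sgn, sgn_map]

lemma insert_castSucc_insert_last (u : Finset (Fin n)) (c : Fin n) :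
    insert (Fin.castSucc c) (insert (Fin.last n) (u.map Fin.castSuccEmb))
      = insert (Fin.last n) ((insert c u).map Fin.castSuccEmb) := by
  rw [map_insert_castSucc, Finset.insert_comm]

/-- Restriction to subsets avoiding the last element. -/
def Rh (F : Finset (Fin (n + 1)) → W) : Finset (Fin n) → W :=
  fun t => F (t.map Fin.castSuccEmb)

/-- Contraction: component containing the last element. -/
def Ph (F : Finset (Fin (n + 1)) → W) : Finset (Fin n) → W :=
  fun t => F (insert (Fin.last n) (t.map Fin.castSuccEmb))

/-- Extension by zero. -/
def Ih (G : Finset (Fin n) → W) : Finset (Fin (n + 1)) → W :=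
  fun s => if Fin.last n ∈ s then 0 else G (unmap s)

/-- Insertion of the last element. -/
def Sh (G : Finset (Fin n) → W) : Finset (Fin (n + 1)) → W :=
  fun s => if Fin.last n ∈ s then G (unmap (s.erase (Fin.last n))) else 0

lemma Rh_Ih (G : Finset (Fin n) → W) : Rh (Ih G) = G := by
  funext t
  rw [Rh, Ih, if_neg (last_not_mem_map t), unmap_map]

lemma Ph_Ih (G : Finset (Fin n) → W) : Ph (Ih G) = 0 := by
  funext t
  rw [Ph, Ih, if_pos (Finset.mem_insert_self _ _)]
  rfl

lemma Rh_Sh (G : Finset (Fin n) → W) : Rh (Sh G) = 0 := by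
  funext t
  rw [Rh, Sh, if_neg (last_not_mem_map t)]
  rfl

lemma Ph_Sh (G : Finset (Fin n) → W) : Ph (Sh G) = G := by
  funext t
  rw [Ph, Sh, if_pos (Finset.mem_insert_self _ _),
    Finset.erase_insert (last_not_mem_map t), unmap_map]

/-- Decomposition of an arbitrary function. -/
lemma Ih_Rh_add_Sh_Ph (F : Finset (Fin (n + 1)) → W) : Ih (Rh F) + Sh (Ph F) = F := by
  funext s
  by_cases h : Fin.last n ∈ s
  · rw [Pi.add_apply, Ih, if_pos h, Sh, if_pos h, Ph,
      map_unmap (Finset.notMem_erase _ _), Finset.insert_erase h, zero_add]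
  · rw [Pi.add_apply, Ih, if_neg h, Sh, if_neg h, Rh, map_unmap h, add_zero]

lemma Ih_add (G G' : Finset (Fin n) → W) : Ih (G + G') = Ih G + Ih G' := by
  funext s
  by_cases h : Fin.last n ∈ s <;> simp [Ih, h]

lemma Sh_add (G G' : Finset (Fin n) → W) : Sh (G + G') = Sh G + Sh G' := by
  funext s
  by_cases h : Fin.last n ∈ s <;> simp [Sh, h]

lemma Ih_smul (r : R) (G : Finset (Fin n) → W) : Ih (r • G) = r • Ih G := by
  funext s
  by_cases h : Fin.last n ∈ s <;> simp [Ih, h]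

lemma Sh_smul (r : R) (G : Finset (Fin n) → W) : Sh (r • G) = r • Sh G := by
  funext s
  by_cases h : Fin.last n ∈ s <;> simp [Sh, h]

lemma Ih_zero : Ih (0 : Finset (Fin n) → W) = 0 := by
  funext s
  by_cases h : Fin.last n ∈ s <;> simp [Ih, h]

lemma Dh_Ih (x : Fin (n + 1) → R) (G : Finset (Fin n) → W) :
    Dh x (Ih G) = Ih (Dh (fun c => x (Fin.castSucc c)) G) := by
  funext s
  by_cases hL : Fin.last n ∈ s
  · rw [Ih, if_pos hL, Dh]
    refine Finset.sum_eq_zero fun a ha => ?_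
    rw [Ih, if_pos (Finset.mem_insert_of_mem hL), smul_zero, smul_zero]
  · obtain ⟨u, rfl⟩ : ∃ u, s = u.map Fin.castSuccEmb := ⟨unmap s, (map_unmap hL).symm⟩
    rw [Ih, if_neg hL, unmap_map, Dh, Dh, compl_map,
      Finset.sum_insert (last_not_mem_map _),
      Ih, if_pos (Finset.mem_insert_self _ _), smul_zero, smul_zero, zero_add,
      Finset.sum_map]
    refine Finset.sum_congr rfl fun c hc => ?_
    rw [show ((Fin.castSuccEmb : Fin n ↪ Fin (n+1)) c) = Fin.castSucc c from rfl,
      sgn_map, ← map_insert_castSucc, Ih, if_neg (last_not_mem_map _), unmap_map]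

lemma Dh_Sh (x : Fin (n + 1) → R) (G : Finset (Fin n) → W) (s : Finset (Fin (n + 1))) :
    Dh x (Sh G) s = Sh (Dh (fun c => x (Fin.castSucc c)) G) s
      + ((-1 : ℤ) ^ s.card) • x (Fin.last n) • Ih G s := by
  by_cases hL : Fin.last n ∈ s
  · obtain ⟨u, rfl⟩ : ∃ u, s = insert (Fin.last n) (u.map Fin.castSuccEmb) :=
      ⟨unmap (s.erase (Fin.last n)), by
        rw [map_unmap (Finset.notMem_erase _ _), Finset.insert_erase hL]⟩
    rw [Ih, if_pos hL, smul_zero, smul_zero, add_zero, Sh, if_pos hL,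
      Finset.erase_insert (last_not_mem_map _), unmap_map, Dh, Dh, Finset.compl_insert,
      compl_map, Finset.erase_insert (last_not_mem_map _), Finset.sum_map]
    refine Finset.sum_congr rfl fun c hc => ?_
    rw [show ((Fin.castSuccEmb : Fin n ↪ Fin (n+1)) c) = Fin.castSucc c from rfl,
      sgn_insert_last, insert_castSucc_insert_last, Sh, if_pos (Finset.mem_insert_self _ _),
      Finset.erase_insert (last_not_mem_map _), unmap_map]
  · obtain ⟨u, rfl⟩ : ∃ u, s = u.map Fin.castSuccEmb := ⟨unmap s, (map_unmap hL).symm⟩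
    rw [Sh, if_neg hL, zero_add, Ih, if_neg hL, unmap_map, Dh, compl_map,
      Finset.sum_insert (last_not_mem_map _), sgn_map_last, Finset.card_map, Sh,
      if_pos (Finset.mem_insert_self _ _), Finset.erase_insert (last_not_mem_map _), unmap_map]
    rw [Finset.sum_map]
    rw [Finset.sum_eq_zero fun c hc => ?_, add_zero]
    rw [show ((Fin.castSuccEmb : Fin n ↪ Fin (n+1)) c) = Fin.castSucc c from rfl,
      ← map_insert_castSucc, Sh, if_neg (last_not_mem_map _), smul_zero, smul_zero]

/-! ### Linearity of `Dh` -/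

lemma Dh_add {m : ℕ} (x : Fin m → R) (F G : Finset (Fin m) → W) :
    Dh x (F + G) = Dh x F + Dh x G := by
  funext s
  rw [Pi.add_apply, Dh, Dh, Dh, ← Finset.sum_add_distrib]
  refine Finset.sum_congr rfl fun a ha => ?_
  rw [Pi.add_apply, smul_add, smul_add]

lemma Dh_smul {m : ℕ} (x : Fin m → R) (r : R) (F : Finset (Fin m) → W) :
    Dh x (r • F) = r • Dh x F := by
  funext s
  rw [Pi.smul_apply, Dh, Dh, Finset.smul_sum]
  refine Finset.sum_congr rfl fun a ha => ?_
  rw [Pi.smul_apply, smul_comm (x a) r, smul_comm (sgn s a) r]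

lemma Dh_zsmul {m : ℕ} (x : Fin m → R) (c : ℤ) (F : Finset (Fin m) → W) :
    Dh x (c • F) = c • Dh x F := by
  funext s
  rw [Pi.smul_apply, Dh, Dh, Finset.smul_sum]
  refine Finset.sum_congr rfl fun a ha => ?_
  rw [Pi.smul_apply, smul_comm (x a) c, smul_comm (sgn s a) c]

lemma Dh_sub {m : ℕ} (x : Fin m → R) (F G : Finset (Fin m) → W) :
    Dh x (F - G) = Dh x F - Dh x G := by
  funext s
  rw [Pi.sub_apply, Dh, Dh, Dh, ← Finset.sum_sub_distrib]
  refine Finset.sum_congr rfl fun a ha => ?_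
  rw [Pi.sub_apply, smul_sub, smul_sub]


/-! ### Subtype-level constructors -/

variable {n i : ℕ}

def rho (f : koszulTerm W (n + 1) i) : koszulTerm W n i :=
  fun t => f ⟨t.1.map Fin.castSuccEmb, by rw [Finset.card_map]; exact t.2⟩

def pi' (f : koszulTerm W (n + 1) (i + 1)) : koszulTerm W n i :=
  fun t => f ⟨insert (Fin.last n) (t.1.map Fin.castSuccEmb), by
    rw [Finset.card_insert_of_notMem (last_not_mem_map _), Finset.card_map, t.2]⟩

def iota (g : koszulTerm W n i) : koszulTerm W (n + 1) i :=
  fun s => Ih (hat g) s.1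

def sigma' (h : koszulTerm W n i) : koszulTerm W (n + 1) (i + 1) :=
  fun s => Sh (hat h) s.1

def eta (t : Fin n) (z : koszulTerm W n i) : koszulTerm W n (i + 1) :=
  fun s => etah t (hat z) s.1

lemma hat_rho (f : koszulTerm W (n + 1) i) : hat (rho f) = Rh (hat f) := by
  funext t
  by_cases h : t.card = i
  · rw [hat_apply _ t h, Rh, hat_apply f _ (by rw [Finset.card_map]; exact h)]
    rfl
  · rw [hat_apply_ne _ t h, Rh, hat_apply_ne f _ (by rw [Finset.card_map]; exact h)]

lemma hat_pi' (f : koszulTerm W (n + 1) (i + 1)) : hat (pi' f) = Ph (hat f) := by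
  funext t
  by_cases h : t.card = i
  · rw [hat_apply _ t h, Ph, hat_apply f _
      (by rw [Finset.card_insert_of_notMem (last_not_mem_map _), Finset.card_map, h])]
    rfl
  · rw [hat_apply_ne _ t h, Ph, hat_apply_ne f _
      (by rw [Finset.card_insert_of_notMem (last_not_mem_map _), Finset.card_map]; omega)]

lemma hat_iota (g : koszulTerm W n i) : hat (iota g) = Ih (hat g) := by
  funext s
  by_cases h : s.card = i
  · rw [hat_apply _ s h]
    rfl
  · rw [hat_apply_ne _ s h, Ih]
    by_cases hL : Fin.last n ∈ s
    · rw [if_pos hL]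
    · rw [if_neg hL, hat_apply_ne g _ (by rw [card_unmap hL]; exact h)]

lemma hat_sigma' (h : koszulTerm W n i) : hat (sigma' h) = Sh (hat h) := by
  funext s
  by_cases hc : s.card = i + 1
  · rw [hat_apply _ s hc]
    rfl
  · rw [hat_apply_ne _ s hc, Sh]
    by_cases hL : Fin.last n ∈ s
    · have h1 : 0 < s.card := Finset.card_pos.mpr ⟨_, hL⟩
      rw [if_pos hL, hat_apply_ne h _ (by
        rw [card_unmap (Finset.notMem_erase _ _), Finset.card_erase_of_mem hL]; omega)]
    · rw [if_neg hL]

lemma hat_eta (t : Fin n) (z : koszulTerm W n i) : hat (eta t z) = etah t (hat z) := by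
  funext s
  by_cases h : s.card = i + 1
  · rw [hat_apply _ s h]
    rfl
  · rw [hat_apply_ne _ s h, etah]
    by_cases ht : t ∈ s
    · have h1 : 0 < s.card := Finset.card_pos.mpr ⟨_, ht⟩
      rw [if_pos ht, hat_apply_ne z _ (by rw [Finset.card_erase_of_mem ht]; omega), smul_zero]
    · rw [if_neg ht]

/-! ### Cycles and boundaries via hats -/

lemma cyc_iff {j : ℕ} (x : Fin n → R) (z : koszulTerm W n j) :
    koszulFullD R W n x j z = 0 ↔ Dh x (hat z) = 0 := by
  cases j with
  | zero =>
    refine iff_of_true ?_ (Dh_hat_degree_zero x z)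
    show (0 : koszulTerm W n 0 →ₗ[R] koszulTerm W n 0) z = 0
    rw [LinearMap.zero_apply]
  | succ m =>
    show koszulD R W n x m z = 0 ↔ _
    constructor
    · intro h
      rw [← hat_koszulD, h, hat_zero]
    · intro h
      exact hat_injective (by rw [hat_koszulD, h, hat_zero])

lemma bdry_iff {j : ℕ} (x : Fin n → R) (z : koszulTerm W n j) :
    z ∈ LinearMap.range (koszulFullD R W n x (j + 1)) ↔
      ∃ u : koszulTerm W n (j + 1), Dh x (hat u) = hat z := by
  show (∃ u, koszulD R W n x j u = z) ↔ _
  constructor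
  · rintro ⟨u, rfl⟩
    exact ⟨u, (hat_koszulD x u).symm⟩
  · rintro ⟨u, hu⟩
    exact ⟨u, hat_injective (by rw [hat_koszulD, hu])⟩

/-- `s` annihilates the `j`-th Koszul homology, expressed at chain level. -/
def KillsH (s : R) (n : ℕ) (x : Fin n → R) (j : ℕ) : Prop :=
  ∀ z : koszulTerm W n j, koszulFullD R W n x j z = 0 →
    s • z ∈ LinearMap.range (koszulFullD R W n x (j + 1))

lemma killsH_iff_mem_annihilator (s : R) (x : Fin n → R) (j : ℕ) :
    KillsH (W := W) (R := R) s n x j ↔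
      s ∈ Module.annihilator R (koszulHomology R W n x j) := by
  rw [Module.mem_annihilator]
  constructor
  · intro hk
    have key : ∀ m : (↥(LinearMap.ker (koszulFullD R W n x j)) ⧸
        Submodule.comap (LinearMap.ker (koszulFullD R W n x j)).subtype
          (LinearMap.range (koszulFullD R W n x (j + 1)))), s • m = 0 := by
      intro m
      obtain ⟨y, rfl⟩ := Submodule.Quotient.mk_surjective _ m
      rw [← Submodule.Quotient.mk_smul, Submodule.Quotient.mk_eq_zero]
      exact Submodule.mem_comap.mpr (hk y.1 (LinearMap.mem_ker.mp y.2))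
    exact key
  · intro hann z hz
    have h0 : s • (Submodule.Quotient.mk ⟨z, LinearMap.mem_ker.mpr hz⟩ :
        ↥(LinearMap.ker (koszulFullD R W n x j)) ⧸
        Submodule.comap (LinearMap.ker (koszulFullD R W n x j)).subtype
          (LinearMap.range (koszulFullD R W n x (j + 1)))) = 0 := hann _
    rw [← Submodule.Quotient.mk_smul, Submodule.Quotient.mk_eq_zero] at h0
    exact Submodule.mem_comap.mp h0

lemma finite_koszulTerm [Module.Finite R W] : Module.Finite R (koszulTerm W n i) :=
  inferInstanceAs (Module.Finite R ({s : Finset (Fin n) // s.card = i} → W))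

lemma finite_koszulHomology [IsNoetherianRing R] [Module.Finite R W] (x : Fin n → R) (j : ℕ) :
    Module.Finite R (koszulHomology R W n x j) := by
  haveI : Module.Finite R (koszulTerm W n j) := finite_koszulTerm
  haveI : Module.Finite R ↥(LinearMap.ker (koszulFullD R W n x j)) :=
    Module.Finite.iff_fg.mpr (IsNoetherian.noetherian _)
  have key : Module.Finite R (↥(LinearMap.ker (koszulFullD R W n x j)) ⧸
      Submodule.comap (LinearMap.ker (koszulFullD R W n x j)).subtype
        (LinearMap.range (koszulFullD R W n x (j + 1)))) :=
    Module.Finite.of_surjective (Submodule.mkQ _) (Submodule.mkQ_surjective _)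
  exact key

/-! ### A localized Nakayama lemma -/

lemma loc_nakayama {N : Type} [AddCommGroup N] [Module R N] [Module.Finite R N]
    (p : Ideal R) [p.IsPrime] (xl r : R) (hx : xl ∈ p) (hr : r ∉ p)
    (hstep : ∀ z : N, ∃ w : N, r • z = xl • w) :
    ∃ s ∉ p, ∀ z : N, s • z = 0 := by
  have hsub : Subsingleton (LocalizedModule p.primeCompl N) := by
    haveI : Module.Finite (Localization.AtPrime p) (LocalizedModule p.primeCompl N) :=
      Module.Finite.of_isLocalizedModule p.primeCompl
        (LocalizedModule.mkLinearMap p.primeCompl N)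
    have hle : (⊤ : Submodule (Localization.AtPrime p) (LocalizedModule p.primeCompl N))
        ≤ (IsLocalRing.maximalIdeal (Localization.AtPrime p)) • ⊤ := by
      intro y _
      induction y using LocalizedModule.induction_on with
      | _ z u =>
        obtain ⟨w, hw⟩ := hstep z
        have hunit : IsUnit (algebraMap R (Localization.AtPrime p) r) :=
          IsLocalization.map_units _ (⟨r, hr⟩ : p.primeCompl)
        obtain ⟨v, hv⟩ := hunit
        have h1 : (v : Localization.AtPrime p) • LocalizedModule.mk z u
            = (algebraMap R (Localization.AtPrime p) xl) • LocalizedModule.mk w u := by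
          rw [hv, algebraMap_smul, algebraMap_smul, LocalizedModule.smul'_mk,
            LocalizedModule.smul'_mk, hw]
        have h2 : LocalizedModule.mk z u
            = ((v⁻¹ : Units (Localization.AtPrime p)) : Localization.AtPrime p)
              • ((v : Localization.AtPrime p) • LocalizedModule.mk z u) := by
          rw [smul_smul, Units.inv_mul, one_smul]
        rw [h2, h1, smul_smul]
        refine Submodule.smul_mem_smul (Ideal.mul_mem_left _ _ ?_) Submodule.mem_top
        exact (IsLocalization.AtPrime.to_map_mem_maximal_iff _ p xl).mpr hx
    have htop : (⊤ : Submodule (Localization.AtPrime p) (LocalizedModule p.primeCompl N)) = ⊥ :=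
      Submodule.eq_bot_of_le_smul_of_le_jacobson_bot _ ⊤
        (Module.finite_def.mp inferInstance) hle (IsLocalRing.maximalIdeal_le_jacobson ⊥)
    refine ⟨fun a b => ?_⟩
    have ha : a ∈ (⊥ : Submodule (Localization.AtPrime p) (LocalizedModule p.primeCompl N)) :=
      htop ▸ Submodule.mem_top
    have hb : b ∈ (⊥ : Submodule (Localization.AtPrime p) (LocalizedModule p.primeCompl N)) :=
      htop ▸ Submodule.mem_top
    rw [Submodule.mem_bot] at ha hb
    rw [ha, hb]
  have hns : (⟨p, inferInstance⟩ : PrimeSpectrum R) ∉ Module.support R N :=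
    Module.notMem_support_iff.mpr hsub
  rw [Module.support_eq_zeroLocus, PrimeSpectrum.mem_zeroLocus] at hns
  obtain ⟨s, hs1, hs2⟩ := Set.not_subset.mp hns
  exact ⟨s, hs2, fun z => Module.mem_annihilator.mp hs1 z⟩

/-! ### Dimension comparison -/

lemma dim_le_of_zeroLocus_subset {I J : Ideal R}
    (h : PrimeSpectrum.zeroLocus (I : Set R) ⊆ PrimeSpectrum.zeroLocus (J : Set R)) :
    ringKrullDim (R ⧸ I) ≤ ringKrullDim (R ⧸ J) := by
  have key : ∀ q : PrimeSpectrum (R ⧸ I), J ≤ q.asIdeal.comap (Ideal.Quotient.mk I) := by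
    intro q
    have hmem : (⟨q.asIdeal.comap (Ideal.Quotient.mk I), inferInstance⟩ : PrimeSpectrum R)
        ∈ PrimeSpectrum.zeroLocus (I : Set R) := by
      rw [PrimeSpectrum.mem_zeroLocus]
      intro a ha
      show Ideal.Quotient.mk I a ∈ q.asIdeal
      rw [Ideal.Quotient.eq_zero_iff_mem.mpr ha]
      exact q.asIdeal.zero_mem
    exact (PrimeSpectrum.mem_zeroLocus _ _).mp (h hmem)
  have hprime : ∀ q : PrimeSpectrum (R ⧸ I),
      (Ideal.map (Ideal.Quotient.mk J) (q.asIdeal.comap (Ideal.Quotient.mk I))).IsPrime := by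
    intro q
    apply Ideal.map_isPrime_of_surjective Ideal.Quotient.mk_surjective
    rw [Ideal.mk_ker]
    exact key q
  let f : PrimeSpectrum (R ⧸ I) → PrimeSpectrum (R ⧸ J) := fun q =>
    ⟨Ideal.map (Ideal.Quotient.mk J) (q.asIdeal.comap (Ideal.Quotient.mk I)), hprime q⟩
  apply Order.krullDim_le_of_strictMono f
  apply Monotone.strictMono_of_injective
  · intro a b hab
    rw [← PrimeSpectrum.asIdeal_le_asIdeal]
    exact Ideal.map_mono (Ideal.comap_mono ((PrimeSpectrum.asIdeal_le_asIdeal _ _).mpr hab))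
  · intro a b hab
    have hab' := congrArg (fun q : PrimeSpectrum (R ⧸ J) =>
      Ideal.comap (Ideal.Quotient.mk J) q.asIdeal) hab
    simp only [f, Ideal.comap_map_of_surjective _ Ideal.Quotient.mk_surjective] at hab'
    rw [← RingHom.ker_eq_comap_bot, Ideal.mk_ker, sup_eq_left.mpr (key a),
      sup_eq_left.mpr (key b)] at hab'
    exact PrimeSpectrum.ext
      (Ideal.comap_injective_of_surjective _ Ideal.Quotient.mk_surjective hab')

section Cone

variable {n : ℕ}

lemma step1_decomp (x : Fin (n + 1) → R) (i : ℕ) (s₀ : R) (z : koszulTerm W n i)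
    (u : koszulTerm W (n + 1) (i + 1))
    (hu : Dh x (hat u) = s₀ • Ih (hat z)) :
    Dh (fun c => x (Fin.castSucc c)) (hat (pi' u)) = 0 ∧
    (∀ t : Finset (Fin n), s₀ • hat z t
        = Dh (fun c => x (Fin.castSucc c)) (hat (rho u)) t
          + ((-1 : ℤ) ^ t.card) • x (Fin.last n) • hat (pi' u) t) := by
  set x' : Fin n → R := fun c => x (Fin.castSucc c) with hx'
  set G : Finset (Fin n) → W := hat (rho u) with hG
  set H : Finset (Fin n) → W := hat (pi' u) with hH
  have hdec : hat u = Ih G + Sh H := by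
    rw [hG, hH, hat_rho, hat_pi']
    exact (Ih_Rh_add_Sh_Ph (hat u)).symm
  have hDu : s₀ • Ih (hat z)
      = Ih (Dh x' G) + (Sh (Dh x' H) + fun s => ((-1 : ℤ) ^ s.card) • x (Fin.last n) • Ih H s) := by
    rw [← hu, hdec, Dh_add, Dh_Ih]
    congr 1
    funext s
    rw [Pi.add_apply]
    exact Dh_Sh x H s
  constructor
  · funext t
    have e := congrFun hDu (insert (Fin.last n) (t.map Fin.castSuccEmb))
    have hL : Fin.last n ∈ insert (Fin.last n) (t.map Fin.castSuccEmb) :=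
      Finset.mem_insert_self _ _
    rw [Pi.smul_apply, Pi.add_apply, Pi.add_apply] at e
    rw [show Ih (hat z) (insert (Fin.last n) (t.map Fin.castSuccEmb)) = 0 from if_pos hL,
      smul_zero] at e
    rw [show Ih (Dh x' G) (insert (Fin.last n) (t.map Fin.castSuccEmb)) = 0 from if_pos hL,
      zero_add] at e
    rw [show Ih H (insert (Fin.last n) (t.map Fin.castSuccEmb)) = 0 from if_pos hL,
      smul_zero, smul_zero, add_zero] at e
    rw [show Sh (Dh x' H) (insert (Fin.last n) (t.map Fin.castSuccEmb))
        = Dh x' H ((insert (Fin.last n) (t.map Fin.castSuccEmb)).erase (Fin.last n)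
            |> unmap) from if_pos hL] at e
    rw [Finset.erase_insert (last_not_mem_map _), unmap_map] at e
    rw [Pi.zero_apply]
    exact e.symm
  · intro t
    have e := congrFun hDu (t.map Fin.castSuccEmb)
    have hL : Fin.last n ∉ t.map Fin.castSuccEmb := last_not_mem_map _
    rw [Pi.smul_apply, Pi.add_apply, Pi.add_apply] at e
    rw [show Ih (hat z) (t.map Fin.castSuccEmb) = hat z (unmap (t.map Fin.castSuccEmb))
        from if_neg hL, unmap_map] at e
    rw [show Ih (Dh x' G) (t.map Fin.castSuccEmb) = Dh x' G (unmap (t.map Fin.castSuccEmb))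
        from if_neg hL, unmap_map] at e
    rw [show Sh (Dh x' H) (t.map Fin.castSuccEmb) = 0 from if_neg hL, zero_add] at e
    rw [show Ih H (t.map Fin.castSuccEmb) = H (unmap (t.map Fin.castSuccEmb))
        from if_neg hL, unmap_map, Finset.card_map] at e
    exact e

end Cone

section Cone2

variable {n : ℕ}

lemma step1_nakayama [IsNoetherianRing R] [Module.Finite R W]
    (p : Ideal R) [hp : p.IsPrime] (x : Fin (n + 1) → R) (i : ℕ)
    (hlast : x (Fin.last n) ∈ p) (s₀ : R) (hs₀ : s₀ ∉ p)
    (H₀ : KillsH (R := R) (W := W) s₀ (n + 1) x i) :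
    ∃ s₁ ∉ p, KillsH (R := R) (W := W) s₁ n (fun c => x (Fin.castSucc c)) i := by
  set x' : Fin n → R := fun c => x (Fin.castSucc c) with hx'
  have hstepraw : ∀ ζ : (↥(LinearMap.ker (koszulFullD R W n x' i)) ⧸
      Submodule.comap (LinearMap.ker (koszulFullD R W n x' i)).subtype
        (LinearMap.range (koszulFullD R W n x' (i + 1)))),
      ∃ ω, s₀ • ζ = x (Fin.last n) • ω := by
    intro ζ
    obtain ⟨y, rfl⟩ := Submodule.Quotient.mk_surjective _ ζ
    have hycyc : Dh x' (hat y.1) = 0 := (cyc_iff x' y.1).mp (LinearMap.mem_ker.mp y.2)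
    have hic : koszulFullD R W (n + 1) x i (iota y.1) = 0 :=
      (cyc_iff x (iota y.1)).mpr (by rw [hat_iota, Dh_Ih, hycyc, Ih_zero])
    obtain ⟨u, hu⟩ := (bdry_iff x _).mp (H₀ (iota y.1) hic)
    rw [hat_smul, hat_iota] at hu
    obtain ⟨hcyc, hpt⟩ := step1_decomp x i s₀ y.1 u hu
    have hwk : ((-1 : ℤ) ^ i) • pi' u ∈ LinearMap.ker (koszulFullD R W n x' i) :=
      LinearMap.mem_ker.mpr
        (by rw [map_zsmul, (cyc_iff x' (pi' u)).mpr hcyc, smul_zero])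
    refine ⟨Submodule.Quotient.mk ⟨((-1 : ℤ) ^ i) • pi' u, hwk⟩, ?_⟩
    rw [← Submodule.Quotient.mk_smul, ← Submodule.Quotient.mk_smul, Submodule.Quotient.eq]
    refine Submodule.mem_comap.mpr ?_
    refine (bdry_iff x' _).mpr ⟨rho u, ?_⟩
    show Dh x' (hat (rho u))
        = hat (s₀ • y.1 - x (Fin.last n) • (((-1 : ℤ) ^ i) • pi' u))
    rw [hat_sub, hat_smul, hat_smul, hat_zsmul]
    funext t
    rw [Pi.sub_apply, Pi.smul_apply, Pi.smul_apply, Pi.smul_apply]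
    by_cases hc : t.card = i
    · have e := hpt t
      rw [hc] at e
      rw [e]
      rw [smul_comm (x (Fin.last n)) ((-1 : ℤ) ^ i)]
      abel
    · rw [hat_apply_ne _ _ hc, hat_apply_ne (pi' u) _ hc]
      have e := hpt t
      rw [hat_apply_ne _ _ hc, hat_apply_ne (pi' u) _ hc, smul_zero, smul_zero, smul_zero,
        add_zero] at e
      rw [← e, smul_zero, smul_zero, smul_zero, sub_zero]
  have hstep : ∀ ζ : koszulHomology R W n x' i, ∃ ω, s₀ • ζ = x (Fin.last n) • ω := hstepraw
  haveI : Module.Finite R (koszulHomology R W n x' i) := finite_koszulHomology x' i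
  obtain ⟨s₁, hs₁, hkill⟩ := loc_nakayama p (x (Fin.last n)) s₀ hlast hs₀ hstep
  exact ⟨s₁, hs₁, (killsH_iff_mem_annihilator s₁ x' i).mpr (Module.mem_annihilator.mpr hkill)⟩

end Cone2

section Cone3

variable {n : ℕ}

lemma step3 (x : Fin (n + 1) → R) (i : ℕ) (s₁ s₂ : R)
    (H₁ : KillsH (R := R) (W := W) s₁ n (fun c => x (Fin.castSucc c)) i)
    (H₂ : KillsH (R := R) (W := W) s₂ n (fun c => x (Fin.castSucc c)) (i + 1)) :
    KillsH (R := R) (W := W) (s₁ * s₂) (n + 1) x (i + 1) := by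
  intro f hf
  set x' : Fin n → R := fun c => x (Fin.castSucc c) with hx'
  have hDf : Dh x (hat f) = 0 := (cyc_iff x f).mp hf
  obtain ⟨hHcyc, hpt⟩ := step1_decomp x i 0 (0 : koszulTerm W n i) f
    (by rw [zero_smul]; exact hDf)
  have hpt' : ∀ t, Dh x' (hat (rho f)) t
      = -(((-1 : ℤ) ^ t.card) • x (Fin.last n) • hat (pi' f) t) := by
    intro t
    have e := hpt t
    rw [zero_smul] at e
    exact eq_neg_of_add_eq_zero_left e.symm
  -- kill pi' f by s₁
  obtain ⟨u, hu⟩ := (bdry_iff x' _).mp (H₁ (pi' f) ((cyc_iff x' _).mpr hHcyc))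
  rw [hat_smul] at hu
  -- the corrected cycle g₁
  set g₁ : koszulTerm W n (i + 1) :=
    s₁ • rho f - ((-1 : ℤ) ^ (i + 1)) • (x (Fin.last n) • u) with hg₁def
  have hhatg₁ : hat g₁ = s₁ • hat (rho f) - ((-1 : ℤ) ^ (i + 1)) • (x (Fin.last n) • hat u) := by
    rw [hg₁def, hat_sub, hat_smul, hat_zsmul, hat_smul]
  have hg₁ : Dh x' (hat g₁) = 0 := by
    rw [hhatg₁, Dh_sub, Dh_smul, Dh_zsmul, Dh_smul]
    funext t
    rw [Pi.zero_apply, Pi.sub_apply, Pi.smul_apply, Pi.smul_apply, Pi.smul_apply, hpt' t]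
    have hut := congrFun hu t
    rw [Pi.smul_apply] at hut
    rw [hut]
    by_cases hc : t.card = i
    · rw [hc, pow_succ, mul_neg_one, neg_smul, smul_neg, sub_neg_eq_add,
        smul_comm s₁ ((-1 : ℤ) ^ i), smul_comm s₁ (x (Fin.last n)), neg_add_cancel]
    · rw [hat_apply_ne (pi' f) _ hc]
      simp
  -- kill g₁ by s₂
  obtain ⟨v, hv⟩ := (bdry_iff x' _).mp (H₂ g₁ ((cyc_iff x' _).mpr hg₁))
  rw [hat_smul] at hv
  -- final witness
  refine (bdry_iff x _).mpr ⟨s₂ • sigma' u + iota v, ?_⟩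
  have hdec : hat f = Ih (hat (rho f)) + Sh (hat (pi' f)) := by
    rw [hat_rho, hat_pi']
    exact (Ih_Rh_add_Sh_Ph (hat f)).symm
  rw [hat_add, hat_smul, hat_sigma', hat_iota, Dh_add, Dh_smul, Dh_Ih, hv, hat_smul, hdec]
  funext s
  rw [Pi.add_apply, Pi.smul_apply, Pi.smul_apply, Pi.add_apply, Dh_Sh x (hat u) s]
  by_cases hL : Fin.last n ∈ s
  · rw [show Ih (hat u) s = 0 from if_pos hL, show Ih (s₂ • hat g₁) s = 0 from if_pos hL,
      smul_zero, smul_zero, add_zero, add_zero,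
      show Ih (hat (rho f)) s = 0 from if_pos hL, zero_add,
      show Sh (Dh x' (hat u)) s = Dh x' (hat u) (unmap (s.erase (Fin.last n))) from if_pos hL,
      show Sh (hat (pi' f)) s = hat (pi' f) (unmap (s.erase (Fin.last n))) from if_pos hL]
    have := congrFun hu (unmap (s.erase (Fin.last n)))
    rw [Pi.smul_apply] at this
    rw [this, smul_smul s₂ s₁, mul_comm s₂ s₁]
  · rw [show Ih (hat u) s = hat u (unmap s) from if_neg hL,
      show Ih (s₂ • hat g₁) s = (s₂ • hat g₁) (unmap s) from if_neg hL,
      show Sh (Dh x' (hat u)) s = 0 from if_neg hL, zero_add,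
      show Ih (hat (rho f)) s = hat (rho f) (unmap s) from if_neg hL,
      show Sh (hat (pi' f)) s = 0 from if_neg hL, add_zero]
    rw [Pi.smul_apply, hhatg₁, Pi.sub_apply, Pi.smul_apply, Pi.smul_apply, Pi.smul_apply]
    by_cases hc : s.card = i + 1
    · rw [hc, smul_sub, smul_smul s₂ s₁, mul_comm s₂ s₁]
      abel
    · rw [hat_apply_ne u _ (by rw [card_unmap hL]; exact hc),
        hat_apply_ne (rho f) _ (by rw [card_unmap hL]; exact hc), smul_zero, smul_zero,
        smul_zero, smul_zero, smul_zero, sub_zero, smul_zero, add_zero, smul_zero]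
  
end Cone3

/-! ### The main inductive step -/

lemma main_step [IsNoetherianRing R] [Module.Finite R W] (p : Ideal R) [hp : p.IsPrime] :
    ∀ (n : ℕ) (x : Fin n → R) (i : ℕ),
      (∃ s ∉ p, KillsH (R := R) (W := W) s n x i) →
      ∃ s ∉ p, KillsH (R := R) (W := W) s n x (i + 1) := by
  intro n
  induction n with
  | zero =>
    intro x i _
    refine ⟨1, fun h1 => hp.ne_top (Ideal.eq_top_iff_one p |>.mpr h1), ?_⟩
    intro z hz
    have hz0 : z = 0 := by
      funext t
      have h0 : t.1 = ∅ := Subsingleton.elim _ _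
      exact absurd t.2 (by rw [h0]; simp)
    rw [one_smul, hz0]
    exact Submodule.zero_mem _
  | succ n IH =>
    intro x i hi
    by_cases hex : ∃ t, x t ∉ p
    · -- some `x t` is outside `p`: `x t` annihilates all Koszul homology.
      obtain ⟨t, ht⟩ := hex
      refine ⟨x t, ht, ?_⟩
      intro z hz
      rw [bdry_iff]
      refine ⟨eta t z, ?_⟩
      rw [hat_eta, hat_smul]
      funext s
      have hc := cartan x t (hat z) s
      rw [(cyc_iff x z).mp hz, etah_zero] at hc
      rw [Pi.zero_apply, add_zero] at hc
      rw [hc]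
      rfl
    · push_neg at hex
      obtain ⟨s₀, hs₀, H₀⟩ := hi
      obtain ⟨s₁, hs₁, H₁⟩ := step1_nakayama p x i (hex _) s₀ hs₀ H₀
      obtain ⟨s₂, hs₂, H₂⟩ := IH (fun c => x (Fin.castSucc c)) i ⟨s₁, hs₁, H₁⟩
      refine ⟨s₁ * s₂, fun hm => ?_, step3 x i s₁ s₂ H₁ H₂⟩
      rcases hp.mem_or_mem hm with h | h
      exacts [hs₁ h, hs₂ h]

end
end KoszulProof


/-- For a commutative Noetherian ring `R`, a finitely generated `R`-module `W` and
a sequence `x = x_1,…,x_n` in `R`, the Koszul homologies satisfy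
`dim H_{i+1}(x;W) ≤ dim H_i(x;W)`; indeed `Supp H_{i+1}(x;W) ⊆ Supp H_i(x;W)`. -/
theorem koszul_homology_support_descending
    [IsNoetherianRing R] [Module.Finite R W] (n : ℕ) (x : Fin n → R) (i : ℕ) :
    Module.support R (koszulHomology R W n x (i + 1)) ⊆
      Module.support R (koszulHomology R W n x i) ∧
    ringKrullDim (R ⧸ Module.annihilator R (koszulHomology R W n x (i + 1))) ≤
      ringKrullDim (R ⧸ Module.annihilator R (koszulHomology R W n x i)) := by
  haveI h1 : Module.Finite R (koszulHomology R W n x i) :=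
    KoszulProof.finite_koszulHomology x i
  haveI h2 : Module.Finite R (koszulHomology R W n x (i + 1)) :=
    KoszulProof.finite_koszulHomology x (i + 1)
  have key : ∀ P : PrimeSpectrum R,
      Module.annihilator R (koszulHomology R W n x (i + 1)) ≤ P.asIdeal →
      Module.annihilator R (koszulHomology R W n x i) ≤ P.asIdeal := by
    intro P hP
    haveI : P.asIdeal.IsPrime := P.2
    by_contra hno
    obtain ⟨s, hs1, hs2⟩ := SetLike.not_le_iff_exists.mp hno
    have hKl : ∃ s ∉ P.asIdeal, KoszulProof.KillsH (R := R) (W := W) s n x i :=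
      ⟨s, hs2, (KoszulProof.killsH_iff_mem_annihilator s x i).mpr hs1⟩
    obtain ⟨s', hs'1, hs'2⟩ := KoszulProof.main_step P.asIdeal n x i hKl
    exact hs'1 (hP ((KoszulProof.killsH_iff_mem_annihilator s' x (i + 1)).mp hs'2))
  have hsupp : Module.support R (koszulHomology R W n x (i + 1)) ⊆
      Module.support R (koszulHomology R W n x i) := by
    rw [Module.support_eq_zeroLocus, Module.support_eq_zeroLocus]
    intro P hP
    rw [PrimeSpectrum.mem_zeroLocus] at hP ⊢
    exact key P hP
  refine ⟨hsupp, ?_⟩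
  apply KoszulProof.dim_le_of_zeroLocus_subset
  rw [← Module.support_eq_zeroLocus, ← Module.support_eq_zeroLocus]
  exact hsupp
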